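/- Let α ≥ 0, β ≥ 0, c ≥ 0, and let δ_0, δ_1, …, δ_N be nonnegative reals with δ_0 = 0 satisfying the recurrence δ_i ≤ exp(αβ/i)·δ_{i−1} + αc/i for each 1 ≤ i ≤ N. Then δ_N ≤ α c N^{αβ + 1}. -/

import Mathlib

/-- the gradient-descent divergence recurrence. If `δ_0 = 0`,
`δ_i ≥ 0`, and `δ_i ≤ exp(αβ/i)·δ_{i−1} + αc/i` for `1 ≤ i ≤ N`, then
`δ_N ≤ α c N^{αβ + 1}`. -/
theorem stmt_14 (N : ℕ) (hN : 1 ≤ N) (α β c : ℝ)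
    (hα : 0 ≤ α) (hβ : 0 ≤ β) (hc : 0 ≤ c)
    (δ : ℕ → ℝ) (hδ0 : δ 0 = 0) (hδnonneg : ∀ i, i ≤ N → 0 ≤ δ i)
    (hrec : ∀ i, 1 ≤ i → i ≤ N →
      δ i ≤ Real.exp (α * β / i) * δ (i - 1) + α * c / i) :
    δ N ≤ α * c * (N : ℝ) ^ (α * β + 1) := by
  set γ := α * β with hγ
  have hγ0 : 0 ≤ γ := mul_nonneg hα hβ
  have hac : 0 ≤ α * c := mul_nonneg hα hc
  have key : ∀ n, n ≤ N → δ n ≤ α * c * (n : ℝ) ^ (γ + 1) := by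
    intro n
    induction n with
    | zero =>
      intro _
      simp [hδ0, Real.zero_rpow (by positivity : γ + 1 ≠ 0)]
    | succ n ih =>
      intro hn
      have hn' : n ≤ N := Nat.le_of_succ_le hn
      have h1 := hrec (n+1) (Nat.succ_le_succ (Nat.zero_le n)) hn
      simp only [Nat.add_sub_cancel] at h1
      have hδn := ih hn'
      have hexp : (0:ℝ) < Real.exp (γ / ((n:ℝ)+1)) := Real.exp_pos _
      have hcast : ((n+1 : ℕ) : ℝ) = (n : ℝ) + 1 := by push_cast; ring
      rw [hcast] at h1 ⊢
      rcases Nat.eq_zero_or_pos n with h0 | hpos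
      · subst h0
        simp only [Nat.cast_zero, zero_add, div_one] at h1 ⊢
        rw [hδ0, mul_zero, zero_add] at h1
        calc δ 1 ≤ α * c := by linarith [h1]
          _ = α * c * (1:ℝ) ^ (γ + 1) := by rw [Real.one_rpow]; ring
      · have hn1 : (1:ℝ) ≤ (n:ℝ) := by exact_mod_cast hpos
        have hnpos : (0:ℝ) < (n:ℝ) := by linarith
        have hn1pos : (0:ℝ) < (n:ℝ) + 1 := by linarith
        -- exp(γ/(n+1)) ≤ ((n+1)/n)^γ
        have hlog : 1 / ((n:ℝ)+1) ≤ Real.log (((n:ℝ)+1)/(n:ℝ)) := by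
          have := Real.one_sub_inv_le_log_of_pos (x := ((n:ℝ)+1)/(n:ℝ)) (by positivity)
          have hinv : (((n:ℝ)+1)/(n:ℝ))⁻¹ = (n:ℝ)/((n:ℝ)+1) := by
            rw [inv_div]
          rw [hinv] at this
          have : 1 - (n:ℝ)/((n:ℝ)+1) = 1/((n:ℝ)+1) := by field_simp; ring
          linarith [Real.one_sub_inv_le_log_of_pos (x := ((n:ℝ)+1)/(n:ℝ)) (by positivity), this]
        have hexple : Real.exp (γ / ((n:ℝ)+1)) ≤ (((n:ℝ)+1)/(n:ℝ)) ^ γ := by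
          rw [Real.rpow_def_of_pos (by positivity)]
          apply Real.exp_le_exp.mpr
          calc γ / ((n:ℝ)+1) = γ * (1 / ((n:ℝ)+1)) := by ring
            _ ≤ γ * Real.log (((n:ℝ)+1)/(n:ℝ)) := by
                exact mul_le_mul_of_nonneg_left hlog hγ0
            _ = Real.log (((n:ℝ)+1)/(n:ℝ)) * γ := by ring
        -- key numeric inequality
        have hid : (((n:ℝ)+1)/(n:ℝ)) ^ γ * (n:ℝ) ^ (γ+1) = ((n:ℝ)+1) ^ γ * (n:ℝ) := by
          rw [Real.div_rpow (by positivity) hnpos.le,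
            Real.rpow_add hnpos, Real.rpow_one]
          field_simp
        have hone : (1:ℝ) ≤ ((n:ℝ)+1) ^ γ :=
          Real.one_le_rpow (by linarith) hγ0
        have hfin : ((n:ℝ)+1) ^ γ * (n:ℝ) + 1 / ((n:ℝ)+1) ≤ ((n:ℝ)+1) ^ (γ+1) := by
          rw [Real.rpow_add hn1pos, Real.rpow_one]
          have : 1 / ((n:ℝ)+1) ≤ 1 := by
            rw [div_le_one hn1pos]; linarith
          nlinarith
        have hrn : (0:ℝ) ≤ (n:ℝ) ^ (γ+1) := Real.rpow_nonneg hnpos.le _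
        have step : Real.exp (γ / ((n:ℝ)+1)) * (n:ℝ) ^ (γ+1) + 1/((n:ℝ)+1)
            ≤ ((n:ℝ)+1) ^ (γ+1) := by
          calc Real.exp (γ / ((n:ℝ)+1)) * (n:ℝ) ^ (γ+1) + 1/((n:ℝ)+1)
              ≤ (((n:ℝ)+1)/(n:ℝ)) ^ γ * (n:ℝ) ^ (γ+1) + 1/((n:ℝ)+1) := by
                have := mul_le_mul_of_nonneg_right hexple hrn
                linarith
            _ = ((n:ℝ)+1) ^ γ * (n:ℝ) + 1/((n:ℝ)+1) := by rw [hid]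
            _ ≤ ((n:ℝ)+1) ^ (γ+1) := hfin
        have hδn' : Real.exp (γ / ((n:ℝ)+1)) * δ n
            ≤ Real.exp (γ / ((n:ℝ)+1)) * (α * c * (n:ℝ) ^ (γ+1)) :=
          mul_le_mul_of_nonneg_left hδn hexp.le
        have := mul_le_mul_of_nonneg_left step hac
        calc δ (n+1) ≤ Real.exp (γ / ((n:ℝ)+1)) * δ n + α * c / ((n:ℝ)+1) := h1
          _ ≤ α * c * (Real.exp (γ / ((n:ℝ)+1)) * (n:ℝ) ^ (γ+1) + 1/((n:ℝ)+1)) := by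
              rw [mul_add]
              have : α * c / ((n:ℝ)+1) = α * c * (1/((n:ℝ)+1)) := by ring
              nlinarith [hδn']
          _ ≤ α * c * ((n:ℝ)+1) ^ (γ+1) := this
  exact key N le_rfl
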